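/- Let p be a prime, k a perfect field of characteristic p, W = W(k) the ring of p-typical Witt vectors of k, and R = W[u,t]/(ut − p). Then p is a nonzerodivisor in R; that is, for r ∈ R, p·r = 0 implies r = 0. -/

import Mathlib

/-!
Let `p` be a prime, `k` a perfect field of characteristic `p`, `W = W(k)` the ring of
`p`-typical Witt vectors of `k`, and `R = W[u,t]/(ut − p)`.
Then `p` is a nonzerodivisor in `R`: for `r ∈ R`, `p·r = 0` implies `r = 0`.
-/

/-- The ideal `(ut - p)` in the polynomial ring `W(k)[u,t]`. -/
noncomputable abbrev NygaardIdeal (p : ℕ) [Fact p.Prime] (k : Type*) [CommRing k] :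
    Ideal (MvPolynomial (Fin 2) (WittVector p k)) :=
  Ideal.span {MvPolynomial.X 0 * MvPolynomial.X 1 -
    (p : MvPolynomial (Fin 2) (WittVector p k))}

/-- The ring `R = W(k)[u,t]/(ut - p)`. -/
noncomputable abbrev NygaardRing (p : ℕ) [Fact p.Prime] (k : Type*) [CommRing k] : Type _ :=
  MvPolynomial (Fin 2) (WittVector p k) ⧸ NygaardIdeal p k

theorem p_nonzerodivisor_nygaardRing (p : ℕ) [Fact p.Prime]
    (k : Type*) [Field k] [CharP k p] [PerfectRing k p] :
    ∀ r : NygaardRing p k, (p : NygaardRing p k) * r = 0 → r = 0 := by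
  intro r hr
  set W := WittVector p k
  set A := MvPolynomial (Fin 2) W
  -- `p` is prime in `A`
  haveI : IsDiscreteValuationRing W := WittVector.isDiscreteValuationRing
  have hpW : Prime (p : W) := (WittVector.irreducible p).prime
  have hpA : Prime ((p : A)) := by
    have : (p : A) = MvPolynomial.C (p : W) := by simp
    rw [this, MvPolynomial.prime_C_iff]
    exact hpW
  -- lift r
  obtain ⟨f, rfl⟩ := Ideal.Quotient.mk_surjective (I := NygaardIdeal p k) r
  have hmem : (p : A) * f ∈ NygaardIdeal p k := by
    rw [← Ideal.Quotient.eq_zero_iff_mem, map_mul, map_natCast]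
    exact hr
  rw [Ideal.mem_span_singleton] at hmem
  obtain ⟨g, hg⟩ := hmem
  -- p * (f + g) = X0 * X1 * g
  have key : (p : A) * (f + g) = MvPolynomial.X 0 * MvPolynomial.X 1 * g := by
    linear_combination hg
  -- p does not divide X0 * X1
  have hnd : ¬ (p : A) ∣ MvPolynomial.X 0 * MvPolynomial.X 1 := by
    intro ⟨h, hh⟩
    have := congrArg (MvPolynomial.map (WittVector.constantCoeff : W →+* k)) hh
    simp only [map_mul, map_natCast, MvPolynomial.map_X, CharP.cast_eq_zero, zero_mul,
      mul_eq_zero] at this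
    rcases this with h0 | h0 <;>
      exact MvPolynomial.X_ne_zero _ h0
  have hdvd : (p : A) ∣ g := by
    have : (p : A) ∣ MvPolynomial.X 0 * MvPolynomial.X 1 * g := ⟨f + g, key.symm⟩
    rcases hpA.dvd_mul.mp this with h | h
    · exact absurd h hnd
    · exact h
  obtain ⟨g', rfl⟩ := hdvd
  have hcancel : f = (MvPolynomial.X 0 * MvPolynomial.X 1 - (p : A)) * g' := by
    apply mul_left_cancel₀ hpA.ne_zero
    rw [hg]; ring
  rw [Ideal.Quotient.eq_zero_iff_mem, Ideal.mem_span_singleton, hcancel]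
  exact dvd_mul_right _ _
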